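/- Let p be prime, n ≥ 1, and f : (Z/pZ)^n → C a function with mean zero (sum of f equals 0). Then the variance of the discrete Radon transform is bounded: (1/(p^n(p^n-1))) * sum over a in (Z/pZ)^n and nonzero b in (Z/pZ)^n of |(1/p) sum_{j=0}^{p-1} f(a+j·b)|^2 ≤ ((p^{n-1}-1)/(p^n-1)) * (1/p^n) * sum_x |f(x)|^2. -/

import Mathlib

open Finset Complex

lemma sum_range_natCast_zmod {p : ℕ} [NeZero p] {M : Type*} [AddCommMonoid M]
    (h : ZMod p → M) : ∑ k ∈ Finset.range p, h (k : ZMod p) = ∑ m : ZMod p, h m := by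
  refine Finset.sum_nbij' (fun k => (k : ZMod p)) (fun m => m.val) ?_ ?_ ?_ ?_ ?_
  · intro a _; exact Finset.mem_univ _
  · intro m _; exact Finset.mem_range.2 (ZMod.val_lt m)
  · intro a ha; exact ZMod.val_cast_of_lt (Finset.mem_range.1 ha)
  · intro m _; exact ZMod.natCast_rightInverse m
  · intro a _; rfl

theorem discreteRadon_variance_bound (p n : ℕ) [Fact p.Prime] (hn : 1 ≤ n)
    (f : (Fin n → ZMod p) → ℂ) (hmean : ∑ x, f x = 0) :
    (1 / ((p : ℝ) ^ n * ((p : ℝ) ^ n - 1))) *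
        ∑ a : Fin n → ZMod p,
          ∑ b ∈ Finset.univ.filter (fun b : Fin n → ZMod p => b ≠ 0),
            ‖(1 / (p : ℂ)) * ∑ j ∈ Finset.range p, f (a + j • b)‖ ^ 2
      ≤ (((p : ℝ) ^ (n - 1) - 1) / ((p : ℝ) ^ n - 1)) *
        ((1 / (p : ℝ) ^ n) * ∑ x, ‖f x‖ ^ 2) := by
  classical
  have hp : p.Prime := Fact.out
  haveI : NeZero p := ⟨hp.ne_zero⟩
  let conj' := (starRingEnd ℂ)
  let R : (Fin n → ZMod p) → (Fin n → ZMod p) → ℂ :=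
    fun a b => ∑ j ∈ Finset.range p, f (a + j • b)
  let B : Finset (Fin n → ZMod p) := Finset.univ.filter (fun b => b ≠ 0)
  let M : Finset (ZMod p) := Finset.univ.filter (fun m : ZMod p => m ≠ 0)
  let S : ℂ := ∑ x, f x * conj' (f x)
  let g : (Fin n → ZMod p) → ZMod p → ℂ := fun b m => ∑ x, f x * conj' (f (x + m • b))
  show (1 / ((p : ℝ) ^ n * ((p : ℝ) ^ n - 1))) *
        ∑ a : Fin n → ZMod p, ∑ b ∈ B, ‖(1 / (p : ℂ)) * R a b‖ ^ 2
      ≤ (((p : ℝ) ^ (n - 1) - 1) / ((p : ℝ) ^ n - 1)) *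
        ((1 / (p : ℝ) ^ n) * ∑ x, ‖f x‖ ^ 2)
  have hBcard : B.card = p ^ n - 1 := by
    have h1 : B = Finset.univ.erase 0 := Finset.filter_ne' _ _
    rw [h1, Finset.card_erase_of_mem (Finset.mem_univ _), Finset.card_univ]
    congr 1
    simp [Fintype.card_fun, ZMod.card]
  have hMcard : M.card = p - 1 := by
    have h1 : M = Finset.univ.erase 0 := Finset.filter_ne' _ _
    rw [h1, Finset.card_erase_of_mem (Finset.mem_univ _), Finset.card_univ, ZMod.card]
  have key1 : ∀ (b : Fin n → ZMod p) (j k : ℕ),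
      (∑ a, f (a + j • b) * conj' (f (a + k • b)))
        = g b ((k : ZMod p) - (j : ZMod p)) := by
    intro b j k
    refine Fintype.sum_equiv (Equiv.addRight (j • b)) _ _ ?_
    intro a
    have hjb : ((j : ZMod p)) • b = j • b := Nat.cast_smul_eq_nsmul _ _ _
    have hkb : ((k : ZMod p)) • b = k • b := Nat.cast_smul_eq_nsmul _ _ _
    have h2 : a + k • b = (a + j • b) + ((k : ZMod p) - (j : ZMod p)) • b := by
      rw [sub_smul, hjb, hkb]; abel
    simp only [Equiv.coe_addRight, h2]
  have key2 : ∀ (b : Fin n → ZMod p) (j : ℕ),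
      (∑ k ∈ Finset.range p, g b ((k : ZMod p) - (j : ZMod p))) = ∑ m : ZMod p, g b m := by
    intro b j
    rw [sum_range_natCast_zmod (fun m => g b (m - (j : ZMod p)))]
    exact Fintype.sum_equiv (Equiv.subRight ((j : ZMod p))) _ _ (fun m => rfl)
  have hg0 : ∀ b, g b 0 = S := by
    intro b; simp [g, S]
  have key3 : ∀ b, (∑ m : ZMod p, g b m) = S + ∑ m ∈ M, g b m := by
    intro b
    have hM : M = Finset.univ.erase 0 := Finset.filter_ne' _ _
    rw [hM, ← hg0 b, Finset.add_sum_erase _ _ (Finset.mem_univ _)]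
  have key4 : ∀ m ∈ M, (∑ b ∈ B, g b m) = ∑ c ∈ B, ∑ x, f x * conj' (f (x + c)) := by
    intro m hm
    have hm0 : m ≠ 0 := (Finset.mem_filter.1 hm).2
    refine Finset.sum_nbij' (fun b => m • b) (fun c => m⁻¹ • c) ?_ ?_ ?_ ?_ ?_
    · intro b hb
      simp only [B, Finset.mem_filter, Finset.mem_univ, true_and] at hb ⊢
      exact smul_ne_zero hm0 hb
    · intro c hc
      simp only [B, Finset.mem_filter, Finset.mem_univ, true_and] at hc ⊢
      exact smul_ne_zero (inv_ne_zero hm0) hc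
    · intro b _; exact inv_smul_smul₀ hm0 b
    · intro c _; exact smul_inv_smul₀ hm0 c
    · intro b _; rfl
  have key5 : (∑ c ∈ B, ∑ x, f x * conj' (f (x + c))) = -S := by
    have hfull : (∑ c : Fin n → ZMod p, ∑ x, f x * conj' (f (x + c))) = 0 := by
      rw [Finset.sum_comm]
      have h1 : ∀ x : Fin n → ZMod p, (∑ c : Fin n → ZMod p, f x * conj' (f (x + c))) = 0 := by
        intro x
        rw [← Finset.mul_sum, ← map_sum]
        have h2 : (∑ c : Fin n → ZMod p, f (x + c)) = ∑ y, f y :=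
          Fintype.sum_equiv (Equiv.addLeft x) _ _ (fun c => rfl)
        rw [h2, hmean, map_zero, mul_zero]
      simp [h1]
    have hB : B = Finset.univ.erase 0 := Finset.filter_ne' _ _
    rw [hB, Finset.sum_erase_eq_sub (Finset.mem_univ _), hfull]
    simp [S]
  have hT : (∑ a, ∑ b ∈ B, R a b * conj' (R a b))
      = (p : ℂ) * ((p ^ n - 1 : ℕ) • S + (p - 1 : ℕ) • (-S)) := by
    rw [Finset.sum_comm]
    have hexp : ∀ b ∈ B, (∑ a, R a b * conj' (R a b))
        = (p : ℂ) * ∑ m : ZMod p, g b m := by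
      intro b _
      have h1 : ∀ a, R a b * conj' (R a b)
          = ∑ j ∈ Finset.range p, ∑ k ∈ Finset.range p,
              f (a + j • b) * conj' (f (a + k • b)) := by
        intro a
        simp only [R]
        rw [map_sum, Finset.sum_mul_sum]
      simp_rw [h1]
      rw [Finset.sum_comm (s := (Finset.univ : Finset (Fin n → ZMod p))) (t := Finset.range p)]
      have h2 : ∀ j ∈ Finset.range p, (∑ a : Fin n → ZMod p, ∑ k ∈ Finset.range p,
          f (a + j • b) * conj' (f (a + k • b))) = ∑ m : ZMod p, g b m := by
        intro j _
        rw [Finset.sum_comm (s := (Finset.univ : Finset (Fin n → ZMod p))) (t := Finset.range p)]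
        calc (∑ k ∈ Finset.range p, ∑ a, f (a + j • b) * conj' (f (a + k • b)))
            = ∑ k ∈ Finset.range p, g b ((k : ZMod p) - (j : ZMod p)) :=
              Finset.sum_congr rfl (fun k _ => key1 b j k)
          _ = ∑ m : ZMod p, g b m := key2 b j
      rw [Finset.sum_congr rfl h2, Finset.sum_const, Finset.card_range, nsmul_eq_mul]
    rw [Finset.sum_congr rfl hexp, ← Finset.mul_sum]
    congr 1
    calc (∑ b ∈ B, ∑ m : ZMod p, g b m)
        = ∑ b ∈ B, (S + ∑ m ∈ M, g b m) := Finset.sum_congr rfl (fun b _ => key3 b)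
      _ = B.card • S + ∑ b ∈ B, ∑ m ∈ M, g b m := by
          rw [Finset.sum_add_distrib, Finset.sum_const]
      _ = B.card • S + ∑ m ∈ M, ∑ b ∈ B, g b m := by rw [Finset.sum_comm]
      _ = B.card • S + ∑ m ∈ M, (-S) := by
          rw [Finset.sum_congr rfl (fun m hm => (key4 m hm).trans key5)]
      _ = (p ^ n - 1 : ℕ) • S + (p - 1 : ℕ) • (-S) := by
          rw [Finset.sum_const, hBcard, hMcard]
  have hT2 : (∑ a, ∑ b ∈ B, R a b * conj' (R a b))
      = (((p : ℝ) * (((p : ℝ) ^ n - 1) - ((p : ℝ) - 1)) : ℝ) : ℂ) * S := by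
    rw [hT]
    have h1 : (1:ℕ) ≤ p ^ n := Nat.one_le_pow _ _ hp.pos
    have h2 : (1:ℕ) ≤ p := hp.pos
    rw [nsmul_eq_mul, nsmul_eq_mul]
    push_cast [Nat.cast_sub h1, Nat.cast_sub h2]
    ring
  have habsinv : ‖(1 / (p : ℂ))‖ = 1 / (p : ℝ) := by
    rw [norm_div, norm_one, Complex.norm_natCast]
  have habs : ∀ (a b : Fin n → ZMod p),
      ‖(1 / (p : ℂ)) * R a b‖ ^ 2
        = (1 / (p : ℝ))^2 * (R a b * conj' (R a b)).re := by
    intro a b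
    rw [norm_mul, mul_pow, habsinv, Complex.mul_conj, Complex.ofReal_re, Complex.sq_norm]
  have hLHS : (∑ a, ∑ b ∈ B, ‖(1 / (p : ℂ)) * R a b‖ ^ 2)
      = (1 / (p : ℝ))^2 * (((p : ℝ) * (((p : ℝ) ^ n - 1) - ((p : ℝ) - 1))) * S.re) := by
    simp_rw [habs, ← Finset.mul_sum]
    congr 1
    have h3 : (∑ a, ∑ b ∈ B, (R a b * conj' (R a b)).re)
        = (∑ a, ∑ b ∈ B, R a b * conj' (R a b)).re := by
      rw [Complex.re_sum]
      exact Finset.sum_congr rfl (fun a _ => (Complex.re_sum _ _).symm)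
    rw [h3, hT2, Complex.re_ofReal_mul]
  have hSre : S.re = ∑ x, ‖f x‖ ^ 2 := by
    rw [Complex.re_sum]
    refine Finset.sum_congr rfl (fun x _ => ?_)
    rw [Complex.mul_conj, Complex.ofReal_re, Complex.sq_norm]
  have hp0 : (p : ℝ) ≠ 0 := Nat.cast_ne_zero.2 hp.ne_zero
  have hone : (1:ℝ) < (p:ℝ) ^ n := by
    have h1 : (1:ℝ) < (p:ℝ) := by exact_mod_cast hp.one_lt
    exact one_lt_pow₀ h1 (by omega)
  have hPne : (p:ℝ) ^ n - 1 ≠ 0 := sub_ne_zero.2 (ne_of_gt hone)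
  have hPn0 : (p:ℝ) ^ n ≠ 0 := pow_ne_zero _ hp0
  have hsplit : (p:ℝ) ^ n = (p:ℝ) ^ (n-1) * p := by
    rw [← pow_succ, Nat.sub_add_cancel hn]
  apply le_of_eq
  rw [hLHS, hSre]
  field_simp
  rw [hsplit]
  ring
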